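/- (De Moivre's mean absolute deviation formula) For a binomial random variable X ~ Bin(T,p), E[|X - Tp|] = 2⌈Tp⌉(1-p)·Pr[X = ⌈Tp⌉] = 2·C(T,⌈Tp⌉)·⌈Tp⌉·p^⌈Tp⌉·(1-p)^(T-⌈Tp⌉+1). -/
import Mathlib


/-- Probability mass function of the binomial distribution `Bin(T, p)` at `k`. -/
noncomputable def binomPMF (T : ℕ) (p : ℝ) (k : ℕ) : ℝ :=
  (T.choose k : ℝ) * p ^ k * (1 - p) ^ (T - k)

/-- PMF of the independent sum `Bin(T-1, p) + Bern(q)` at `k`. -/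
noncomputable def binBernConvPMF (T : ℕ) (p q : ℝ) (k : ℕ) : ℝ :=
  (1 - q) * binomPMF (T - 1) p k +
    q * (if k = 0 then 0 else binomPMF (T - 1) p (k - 1))

/-- Total variation distance between two probability distributions on ℕ. -/
noncomputable def tvDist (f g : ℕ → ℝ) : ℝ := (1 / 2) * ∑' k, |f k - g k|

/-- Mean absolute deviation of `X ~ Bin(T, p)` from its mean `Tp`. -/
noncomputable def binomMAD (T : ℕ) (p : ℝ) : ℝ :=
  ∑ k ∈ Finset.range (T + 1), binomPMF T p k * |(k : ℝ) - (T : ℝ) * p|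

/-- De Moivre's formula: for `X ~ Bin(T,p)`,
`E[|X - Tp|] = 2⌈Tp⌉(1-p)·Pr[X = ⌈Tp⌉] = 2·C(T,⌈Tp⌉)·⌈Tp⌉·p^⌈Tp⌉·(1-p)^(T-⌈Tp⌉+1)`. -/
lemma binom_sum (n : ℕ) (p : ℝ) : ∑ k ∈ Finset.range (n+1), binomPMF n p k = 1 := by
  have h := add_pow p (1 - p) n
  simp only [add_sub_cancel, one_pow] at h
  rw [h]
  apply Finset.sum_congr rfl
  intro k hk
  rw [binomPMF]; ring

lemma idB (n k : ℕ) (p : ℝ) :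
    ((k+1 : ℕ) : ℝ) * binomPMF (n+1) p (k+1) = ((n+1 : ℕ) : ℝ) * p * binomPMF n p k := by
  have h : (n+1) * n.choose k = (n+1).choose (k+1) * (k+1) := Nat.add_one_mul_choose_eq n k
  have h' : ((n:ℝ)+1) * (n.choose k : ℝ) = ((n+1).choose (k+1) : ℝ) * ((k:ℝ)+1) := by
    exact_mod_cast congrArg (Nat.cast (R := ℝ)) h
  simp only [binomPMF, Nat.succ_sub_succ]
  push_cast
  rw [pow_succ]
  linear_combination (p ^ k * p * (1 - p) ^ (n - k)) * h'.symm

lemma idC (n k : ℕ) (p : ℝ) :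
    binomPMF (n+1) p (k+1) = p * binomPMF n p k + (1-p) * binomPMF n p (k+1) := by
  simp only [binomPMF, Nat.succ_sub_succ, Nat.choose_succ_succ]
  rcases lt_or_ge k n with h | h
  · have : n - k = (n - (k+1)) + 1 := by omega
    rw [this, pow_succ, pow_succ]
    push_cast
    ring
  · have h1 : n.choose (k+1) = 0 := Nat.choose_eq_zero_of_lt (by omega)
    have h2 : n - k = 0 := by omega
    rw [h1, h2, pow_succ]
    push_cast
    ring

lemma idD (n k : ℕ) (p : ℝ) :
    binomPMF (n+1) p (k+1) * (((k+1:ℕ) : ℝ) - ((n+1:ℕ):ℝ) * p) =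
      ((n+1:ℕ):ℝ) * p * (1-p) * (binomPMF n p k - binomPMF n p (k+1)) := by
  have hb := idB n k p
  have hc := idC n k p
  push_cast at hb hc ⊢
  linear_combination hb - ((n:ℝ)+1) * p * hc


theorem stmt2 (T : ℕ) (hT : 1 ≤ T) (p : ℝ) (hp0 : 0 < p) (hp1 : p < 1) :
    binomMAD T p =
        2 * (⌈(T : ℝ) * p⌉₊ : ℝ) * (1 - p) * binomPMF T p ⌈(T : ℝ) * p⌉₊ ∧
      binomMAD T p =
        2 * (T.choose ⌈(T : ℝ) * p⌉₊ : ℝ) * (⌈(T : ℝ) * p⌉₊ : ℝ) *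
          p ^ ⌈(T : ℝ) * p⌉₊ * (1 - p) ^ (T - ⌈(T : ℝ) * p⌉₊ + 1) := by
  obtain ⟨n, rfl⟩ : ∃ n, T = n + 1 := ⟨T - 1, by omega⟩
  set μ : ℝ := ((n+1 : ℕ) : ℝ) * p with hμdef
  set m : ℕ := ⌈μ⌉₊ with hmdef
  set b : ℕ → ℝ := binomPMF (n+1) p with hbdef
  set c : ℕ → ℝ := binomPMF n p with hcdef
  have hμpos : 0 < μ := by
    have : (0:ℝ) < ((n+1:ℕ):ℝ) := by positivity
    exact mul_pos this hp0
  have hm1 : 1 ≤ m := Nat.one_le_ceil_iff.mpr hμpos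
  have hmT : m ≤ n + 1 := by
    apply Nat.ceil_le.mpr
    rw [hμdef]
    have hn : (0:ℝ) ≤ ((n+1:ℕ):ℝ) := by positivity
    nlinarith [hn]
  have hμm : μ ≤ (m : ℝ) := Nat.le_ceil μ
  -- mean identity
  have hmoment : ∑ k ∈ Finset.range (n+2), b k * (k : ℝ) = μ := by
    rw [Finset.sum_range_succ']
    have h0 : b 0 * ((0:ℕ) : ℝ) = 0 := by simp
    rw [h0, add_zero]
    have : ∀ i ∈ Finset.range (n+1), b (i+1) * ((i+1 : ℕ) : ℝ) = μ * c i := by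
      intro i _
      rw [hbdef, hcdef, hμdef, mul_comm (binomPMF (n+1) p (i+1)) _]
      have := idB n i p
      push_cast at this ⊢
      linarith [this]
    rw [Finset.sum_congr rfl this, ← Finset.mul_sum, binom_sum, mul_one]
  have hmean : ∑ k ∈ Finset.range (n+2), b k * ((k : ℝ) - μ) = 0 := by
    have : ∀ k ∈ Finset.range (n+2), b k * ((k:ℝ) - μ) = b k * (k:ℝ) - μ * b k := by
      intro k _; ring
    rw [Finset.sum_congr rfl this, Finset.sum_sub_distrib, hmoment, ← Finset.mul_sum,
      binom_sum, mul_one, sub_self]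
  -- split sums
  have hsplit : ∀ f : ℕ → ℝ, ∑ k ∈ Finset.range (n+2), f k
      = ∑ k ∈ Finset.range m, f k + ∑ k ∈ Finset.Ico m (n+2), f k := by
    intro f
    exact (Finset.sum_range_add_sum_Ico f (by omega)).symm
  have habs1 : ∑ k ∈ Finset.range m, b k * |(k:ℝ) - μ|
      = - ∑ k ∈ Finset.range m, b k * ((k:ℝ) - μ) := by
    rw [← Finset.sum_neg_distrib]
    apply Finset.sum_congr rfl
    intro k hk
    have hk' : (k:ℝ) < μ := Nat.lt_ceil.mp (Finset.mem_range.mp hk)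
    rw [abs_of_neg (by linarith)]
    ring
  have habs2 : ∑ k ∈ Finset.Ico m (n+2), b k * |(k:ℝ) - μ|
      = ∑ k ∈ Finset.Ico m (n+2), b k * ((k:ℝ) - μ) := by
    apply Finset.sum_congr rfl
    intro k hk
    have hk' : m ≤ k := (Finset.mem_Ico.mp hk).1
    have : μ ≤ (k:ℝ) := le_trans hμm (by exact_mod_cast hk')
    rw [abs_of_nonneg (by linarith)]
  have hMAD : binomMAD (n+1) p = 2 * ∑ k ∈ Finset.Ico m (n+2), b k * ((k:ℝ) - μ) := by
    have e1 : binomMAD (n+1) p = ∑ k ∈ Finset.range (n+2), b k * |(k:ℝ) - μ| := rfl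
    rw [e1, hsplit (fun k => b k * |(k:ℝ) - μ|), habs1, habs2]
    have := hmean
    rw [hsplit (fun k => b k * ((k:ℝ) - μ))] at this
    linarith
  -- telescoping
  have htel : ∑ k ∈ Finset.Ico m (n+2), b k * ((k:ℝ) - μ) = μ * (1-p) * c (m-1) := by
    rw [Finset.sum_Ico_eq_sum_range]
    have hterm : ∀ i ∈ Finset.range (n+2-m),
        b (m+i) * (((m+i : ℕ) : ℝ) - μ) = μ * (1-p) * (c (m-1+i) - c (m-1+(i+1))) := by
      intro i _
      have hk : m + i = (m-1+i) + 1 := by omega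
      have hk2 : m - 1 + (i+1) = (m-1+i) + 1 := by omega
      rw [hk, hk2, hbdef, hcdef, hμdef]
      exact idD n (m-1+i) p
    rw [Finset.sum_congr rfl hterm, ← Finset.mul_sum]
    rw [Finset.sum_range_sub' (fun i => c (m-1+i))]
    have h1 : m - 1 + 0 = m - 1 := by omega
    have h2 : m - 1 + (n+2-m) = n + 1 := by omega
    have h3 : c (n+1) = 0 := by
      rw [hcdef, binomPMF, Nat.choose_eq_zero_of_lt (by omega)]
      simp
    simp only [h1, h2, h3, sub_zero]
  have hfin : μ * c (m-1) = (m:ℝ) * b m := by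
    have := idB n (m-1) p
    have hm : m - 1 + 1 = m := by omega
    rw [hm] at this
    rw [hbdef, hcdef, hμdef, this]
  have key : binomMAD (n+1) p = 2 * (m:ℝ) * (1-p) * b m := by
    rw [hMAD, htel]
    nlinarith [hfin]
  constructor
  · exact key
  · rw [key, hbdef, binomPMF]
    have : n + 1 - m + 1 = (n + 1 - m) + 1 := rfl
    rw [this, pow_succ]
    ring
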